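/- Let M ≥ 2 and a: ℤ → ℂ a finitely supported mask with ∑_k a(k) = 1, order J ≥ 1 sum rules with respect to M, and moments ∑_{k∈ℤ} k^j a(k) = m_a^j for all j = 0, …, J−1 with m_a := (M−1) s_a for some s_a ∈ ℝ. Then for every polynomial p of degree < J and every n ≥ 1, S_{a,M}^n p = p(M^{-n}(s_a + ·) − s_a) as sequences on ℤ, where S_{a,M} is the subdivision operator. -/

import Mathlib

/-- The symbol `ã(z) = ∑_k a(k) z^k` of a sequence, as a Laurent polynomial. -/
noncomputable def symb (a : ℤ → ℂ) : LaurentPolynomial ℂ :=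
  ∑ᶠ k : ℤ, LaurentPolynomial.C (a k) * LaurentPolynomial.T k

/-- The subdivision operator `(S_{a,M} v)(j) = M ∑_k v(k) a(j - M k)`. -/
noncomputable def subdiv (M : ℕ) (a : ℤ → ℂ) (v : ℤ → ℂ) : ℤ → ℂ :=
  fun j => (M : ℂ) * ∑ᶠ k : ℤ, v k * a (j - (M : ℤ) * k)

open Polynomial LaurentPolynomial

lemma natdeg_lt {q : Polynomial ℂ} {J : ℕ} (hJ : 1 ≤ J) (h : q.degree < (J : ℕ)) :
    q.natDegree < J := by
  rcases eq_or_ne q 0 with rfl | h0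
  · simpa using (show 0 < J by omega)
  · exact (natDegree_lt_iff_degree_lt h0).mpr h

lemma deg_shift_sub {q : Polynomial ℂ} {J : ℕ} (hq : q.degree < ((J + 1 : ℕ) : WithBot ℕ))
    (c d : ℂ) : (q.comp (X + Polynomial.C c) - q.comp (X + Polynomial.C d)).degree < (J : ℕ) := by
  by_cases h0 : q.comp (X + Polynomial.C c) - q.comp (X + Polynomial.C d) = 0
  · rw [h0, Polynomial.degree_zero]; exact WithBot.bot_lt_coe J
  have hq0 : q ≠ 0 := by rintro rfl; simp at h0
  have hnd : ∀ e : ℂ, (q.comp (X + Polynomial.C e)).natDegree = q.natDegree := by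
    intro e; rw [natDegree_comp, natDegree_X_add_C, mul_one]
  have hlc : ∀ e : ℂ, (q.comp (X + Polynomial.C e)).leadingCoeff = q.leadingCoeff := by
    intro e
    rw [leadingCoeff_comp (by rw [natDegree_X_add_C]; exact one_ne_zero), leadingCoeff_X_add_C,
      one_pow, mul_one]
  have hne : ∀ e : ℂ, q.comp (X + Polynomial.C e) ≠ 0 := by
    intro e he
    apply hq0
    rw [← leadingCoeff_eq_zero, ← hlc e, he, leadingCoeff_zero]
  have hdeg : ∀ e : ℂ, (q.comp (X + Polynomial.C e)).degree = q.degree := by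
    intro e
    rw [degree_eq_natDegree (hne e), degree_eq_natDegree hq0, hnd e]
  have hlt : (q.comp (X + Polynomial.C c) - q.comp (X + Polynomial.C d)).degree
      < (q.comp (X + Polynomial.C c)).degree :=
    degree_sub_lt (by rw [hdeg c, hdeg d]) (hne c) (by rw [hlc c, hlc d])
  rw [hdeg c, degree_eq_natDegree hq0] at hlt
  have h1 : (q.comp (X + Polynomial.C c) - q.comp (X + Polynomial.C d)).natDegree < q.natDegree := by
    have := (natDegree_lt_iff_degree_lt h0).mpr hlt
    exact this
  have h2 : q.natDegree < J + 1 := (natDegree_lt_iff_degree_lt hq0).mpr hq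
  exact (natDegree_lt_iff_degree_lt h0).mp (by omega)

lemma const_of_step (g : ℤ → ℂ) (h : ∀ j : ℤ, g j = g (j + 1)) : ∀ j j' : ℤ, g j = g j' := by
  suffices H : ∀ j : ℤ, g j = g 0 by intro j j'; rw [H j, H j']
  intro j
  induction j using Int.induction_on with
  | zero => rfl
  | succ n hn => rw [← h n, hn]
  | pred n hn =>
      have h2 : (-(n : ℤ) - 1) + 1 = -(n : ℤ) := by ring
      rw [h (-(n : ℤ) - 1), h2, hn]

noncomputable def TT (M : ℕ) (F : LaurentPolynomial ℂ) (q : Polynomial ℂ) (j : ℤ) : ℂ :=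
  ∑ᶠ l : ℤ, if (M : ℤ) ∣ (l - j) then F.coeff l * q.eval (l : ℂ) else 0

lemma TT_support (M : ℕ) (F : LaurentPolynomial ℂ) (q : Polynomial ℂ) (j : ℤ) :
    (Function.support fun l : ℤ => if (M : ℤ) ∣ (l - j) then F.coeff l * q.eval (l : ℂ) else 0)
      ⊆ ↑F.coeff.support := by
  intro l hl
  simp only [Function.mem_support, ne_eq] at hl
  rw [Finset.mem_coe, Finsupp.mem_support_iff]
  intro h
  apply hl
  simp [h]

lemma TT_support_finite (M : ℕ) (F : LaurentPolynomial ℂ) (q : Polynomial ℂ) (j : ℤ) :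
    (Function.support fun l : ℤ => if (M : ℤ) ∣ (l - j) then F.coeff l * q.eval (l : ℂ) else 0).Finite :=
  (F.coeff.support.finite_toSet).subset (TT_support M F q j)

lemma TT_add (M : ℕ) (F G : LaurentPolynomial ℂ) (q : Polynomial ℂ) (j : ℤ) :
    TT M (F + G) q j = TT M F q j + TT M G q j := by
  unfold TT
  rw [← finsum_add_distrib (TT_support_finite M F q j) (TT_support_finite M G q j)]
  refine finsum_congr fun l => ?_
  have hadd : (F + G).coeff l = F.coeff l + G.coeff l := by rw [AddMonoidAlgebra.coeff_add, Finsupp.add_apply]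
  by_cases h : (M : ℤ) ∣ (l - j) <;> simp [h, hadd, add_mul]

lemma TT_zero (M : ℕ) (q : Polynomial ℂ) (j : ℤ) : TT M 0 q j = 0 := by
  unfold TT
  have : ∀ l : ℤ, (if (M : ℤ) ∣ (l - j) then (0 : LaurentPolynomial ℂ).coeff l * q.eval (l : ℂ) else 0) = 0 := by
    intro l; by_cases h : (M : ℤ) ∣ (l - j) <;> simp [h]
  rw [finsum_congr this, finsum_zero]

lemma TT_q_sub (M : ℕ) (F : LaurentPolynomial ℂ) (q r : Polynomial ℂ) (j : ℤ) :
    TT M F (q - r) j = TT M F q j - TT M F r j := by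
  unfold TT
  rw [← finsum_sub_distrib (TT_support_finite M F q j) (TT_support_finite M F r j)]
  refine finsum_congr fun l => ?_
  by_cases h : (M : ℤ) ∣ (l - j) <;> simp [h, mul_sub]

lemma TT_congr_mod (M : ℕ) (F : LaurentPolynomial ℂ) (q : Polynomial ℂ) {j j' : ℤ}
    (h : (M : ℤ) ∣ (j - j')) : TT M F q j = TT M F q j' := by
  unfold TT
  refine finsum_congr fun l => ?_
  have hiff : (M : ℤ) ∣ (l - j) ↔ (M : ℤ) ∣ (l - j') := by
    constructor
    · intro hd
      have : l - j' = (l - j) + (j - j') := by ring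
      rw [this]; exact dvd_add hd h
    · intro hd
      have : l - j = (l - j') - (j - j') := by ring
      rw [this]; exact dvd_sub hd h
  by_cases hc : (M : ℤ) ∣ (l - j)
  · rw [if_pos hc, if_pos (hiff.mp hc)]
  · rw [if_neg hc, if_neg (fun hx => hc (hiff.mpr hx))]

lemma TT_single_mul (M : ℕ) (i : ℤ) (G : LaurentPolynomial ℂ) (q : Polynomial ℂ) (j : ℤ) :
    TT M (LaurentPolynomial.T i * G) q j
      = TT M G (q.comp (X + Polynomial.C (i : ℂ))) (j - i) := by
  unfold TT
  rw [← finsum_comp_equiv (Equiv.addRight i)]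
  refine finsum_congr fun m => ?_
  have he : ((Equiv.addRight i) m : ℤ) = m + i := rfl
  rw [he]
  have hco : ((LaurentPolynomial.T i * G : LaurentPolynomial ℂ)).coeff (m + i) = G.coeff m := by
    show (AddMonoidAlgebra.single i (1:ℂ) * G).coeff (m + i) = G.coeff m
    rw [AddMonoidAlgebra.coeff_single_mul_apply]
    simp
  have hcond : ((M : ℤ) ∣ (m + i - j)) ↔ ((M : ℤ) ∣ (m - (j - i))) := by
    constructor <;> intro hd <;> [skip; skip] <;>
      · have : (m + i - j) = (m - (j - i)) := by ring
        first
          | (rw [← this]; exact hd)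
          | (rw [this]; exact hd)
  have heval : (q.comp (X + Polynomial.C (i : ℂ))).eval (m : ℂ) = q.eval ((↑(m + i) : ℂ)) := by
    rw [eval_comp]; push_cast; simp
  by_cases hc : (M : ℤ) ∣ (m + i - j)
  · rw [if_pos hc, if_pos (hcond.mp hc), hco, heval]
  · rw [if_neg hc, if_neg (fun hx => hc (hcond.mpr hx))]

noncomputable def TThom (M : ℕ) (q : Polynomial ℂ) (j : ℤ) : LaurentPolynomial ℂ →+ ℂ where
  toFun F := TT M F q j
  map_zero' := TT_zero M q j
  map_add' F G := TT_add M F G q j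

lemma TT_sigma_mul (M : ℕ) (G : LaurentPolynomial ℂ) (q : Polynomial ℂ) (j : ℤ) :
    TT M ((∑ i ∈ Finset.range M, LaurentPolynomial.T (i : ℤ)) * G) q j
      = ∑ i ∈ Finset.range M, TT M G (q.comp (X + Polynomial.C (i : ℂ))) (j - i) := by
  rw [Finset.sum_mul]
  have : TT M (∑ i ∈ Finset.range M, LaurentPolynomial.T (i : ℤ) * G) q j
      = TThom M q j (∑ i ∈ Finset.range M, LaurentPolynomial.T (i : ℤ) * G) := rfl
  rw [this, map_sum]
  exact Finset.sum_congr rfl fun i _ => TT_single_mul M i G q j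

lemma TT_q_zero (M : ℕ) (F : LaurentPolynomial ℂ) (j : ℤ) : TT M F 0 j = 0 := by
  unfold TT; simp

lemma TT_q_add (M : ℕ) (F : LaurentPolynomial ℂ) (q r : Polynomial ℂ) (j : ℤ) :
    TT M F (q + r) j = TT M F q j + TT M F r j := by
  unfold TT
  rw [← finsum_add_distrib (TT_support_finite M F q j) (TT_support_finite M F r j)]
  refine finsum_congr fun l => ?_
  by_cases h : (M : ℤ) ∣ (l - j) <;> simp [h, mul_add]

noncomputable def TTqhom (M : ℕ) (F : LaurentPolynomial ℂ) (j : ℤ) : Polynomial ℂ →+ ℂ where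
  toFun q := TT M F q j
  map_zero' := TT_q_zero M F j
  map_add' q r := TT_q_add M F q r j

lemma TT_const (M : ℕ) :
    ∀ (Jn : ℕ) (b : LaurentPolynomial ℂ) (q : Polynomial ℂ),
      q.degree < (Jn : ℕ) → ∀ j j' : ℤ,
      TT M ((∑ i ∈ Finset.range M, LaurentPolynomial.T (i : ℤ)) ^ Jn * b) q j
        = TT M ((∑ i ∈ Finset.range M, LaurentPolynomial.T (i : ℤ)) ^ Jn * b) q j' := by
  intro Jn
  induction Jn with
  | zero =>
      intro b q hq j j'
      have hqbot : q.degree = ⊥ := by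
        have h0 : q.degree < ((0 : ℕ) : WithBot ℕ) := hq
        rw [Nat.cast_zero] at h0
        exact Nat.WithBot.lt_zero_iff.mp h0
      have hq0 : q = 0 := Polynomial.degree_eq_bot.mp hqbot
      subst hq0
      rw [TT_q_zero, TT_q_zero]
  | succ Jn ih =>
      intro b q hq j j'
      have hfac : (∑ i ∈ Finset.range M, LaurentPolynomial.T (i : ℤ)) ^ (Jn + 1) * b
          = (∑ i ∈ Finset.range M, LaurentPolynomial.T (i : ℤ))
            * ((∑ i ∈ Finset.range M, LaurentPolynomial.T (i : ℤ)) ^ Jn * b) := by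
        rw [pow_succ]; ring
      set G : LaurentPolynomial ℂ :=
        (∑ i ∈ Finset.range M, LaurentPolynomial.T (i : ℤ)) ^ Jn * b with hG
      refine const_of_step _ ?_ j j'
      intro j0
      rw [hfac, TT_sigma_mul, TT_sigma_mul]
      set Q : ℕ → Polynomial ℂ := fun i => q.comp (X + Polynomial.C (i : ℂ)) with hQ
      have hQdeg : ∀ i i' : ℕ, (Q i - Q i').degree < (Jn : ℕ) := fun i i' =>
        deg_shift_sub hq _ _
      have hIH : ∀ q' : Polynomial ℂ, q'.degree < (Jn : ℕ) → ∀ m m' : ℤ,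
          TT M G q' m = TT M G q' m' := fun q' h m m' => ih b q' h m m'
      set u : ℕ → ℂ := fun i => TT M G (Q i) (j0 + 1 - (i : ℤ)) with hu
      have key : ∀ i : ℕ, TT M G (Q i) (j0 - (i : ℤ))
          = u (i + 1) + TT M G (Q i - Q (i + 1)) 0 := by
        intro i
        have e1 : TT M G (Q i - Q (i + 1)) (j0 - (i : ℤ)) = TT M G (Q i - Q (i + 1)) 0 :=
          hIH _ (hQdeg i (i + 1)) _ _
        have e2 : TT M G (Q (i + 1)) (j0 - (i : ℤ)) = u (i + 1) := by
          rw [hu]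
          congr 1
          push_cast
          ring
        rw [TT_q_sub] at e1
        linear_combination e1 + e2
      have htel : ∑ i ∈ Finset.range M, TT M G (Q i - Q (i + 1)) 0 = TT M G (Q 0 - Q M) 0 := by
        have h1 : ∀ i : ℕ, TT M G (Q i - Q (i + 1)) 0
            = TTqhom M G 0 (Q i) - TTqhom M G 0 (Q (i + 1)) := by
          intro i
          show TT M G (Q i - Q (i + 1)) 0 = TT M G (Q i) 0 - TT M G (Q (i + 1)) 0
          rw [TT_q_sub]
        rw [Finset.sum_congr rfl (fun i _ => h1 i), Finset.sum_range_sub' (fun i => TTqhom M G 0 (Q i)) M]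
        show TTqhom M G 0 (Q 0) - TTqhom M G 0 (Q M) = _
        rw [← map_sub]
        rfl
      have hsum : ∑ i ∈ Finset.range M, TT M G (q.comp (X + Polynomial.C (i : ℂ))) (j0 - (i : ℤ))
          = ∑ i ∈ Finset.range M, u (i + 1) + TT M G (Q 0 - Q M) 0 := by
        rw [Finset.sum_congr rfl (fun i _ => key i), Finset.sum_add_distrib, htel]
      have hQM : TT M G (Q M) (j0 + 1 - (M : ℤ)) = TT M G (Q M) (j0 + 1) :=
        TT_congr_mod M G (Q M) ⟨-1, by ring⟩
      have huM : u M - u 0 = TT M G (Q M - Q 0) 0 := by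
        have h0 : u 0 = TT M G (Q 0) (j0 + 1) := by rw [hu]; norm_num
        have hM' : u M = TT M G (Q M) (j0 + 1) := hQM
        have h2 : TT M G (Q M - Q 0) (j0 + 1) = TT M G (Q M - Q 0) 0 :=
          hIH _ (hQdeg M 0) _ _
        rw [TT_q_sub] at h2
        rw [h0, hM']
        linear_combination h2
      have htel2 : ∑ i ∈ Finset.range M, u (i + 1) - ∑ i ∈ Finset.range M, u i = u M - u 0 := by
        rw [← Finset.sum_sub_distrib, Finset.sum_range_sub u M]
      have hzero : TT M G (Q 0 - Q M) 0 + TT M G (Q M - Q 0) 0 = 0 := by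
        rw [TT_q_sub, TT_q_sub]; ring
      have hgoal : ∑ i ∈ Finset.range M, u (i + 1) + TT M G (Q 0 - Q M) 0
          = ∑ i ∈ Finset.range M, u i := by
        linear_combination htel2 + huM + hzero
      rw [hsum, hgoal]


lemma symb_apply (a : ℤ → ℂ) (ha : (Function.support a).Finite) (l : ℤ) :
    (symb a).coeff l = a l := by
  have h1 : symb a = ∑ᶠ k : ℤ, (AddMonoidAlgebra.single k (a k) : LaurentPolynomial ℂ) :=
    finsum_congr fun k => (single_eq_C_mul_T (a k) k).symm
  have hfin : (Function.support fun k : ℤ =>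
      (AddMonoidAlgebra.single k (a k) : LaurentPolynomial ℂ)).Finite := by
    apply ha.subset
    intro k hk
    simp only [Function.mem_support, ne_eq] at hk ⊢
    intro h; apply hk; rw [h]; simp
  have h2 : (symb a).coeff l = ∑ᶠ k : ℤ, (Finsupp.single k (a k) : ℤ →₀ ℂ) l := by
    rw [h1]
    exact AddMonoidHom.map_finsum
      ((Finsupp.applyAddHom l).comp (AddMonoidAlgebra.coeffAddEquiv (R := ℂ) (M := ℤ)).toAddMonoidHom) hfin
  calc (symb a).coeff l = ∑ᶠ k : ℤ, (Finsupp.single k (a k) : ℤ →₀ ℂ) l := h2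
    _ = a l := by
        rw [finsum_eq_single _ l
          (by intro x hx; rw [Finsupp.single_apply, if_neg hx]),
          Finsupp.single_apply, if_pos rfl]

lemma TT_total (M : ℕ) (hM : 2 ≤ M) (F : LaurentPolynomial ℂ) (q : Polynomial ℂ) :
    ∑ r ∈ Finset.range M, TT M F q (r : ℤ) = ∑ᶠ l : ℤ, F.coeff l * q.eval (l : ℂ) := by
  have hTT : ∀ r : ℤ, TT M F q r
      = ∑ l ∈ F.coeff.support, if (M : ℤ) ∣ (l - r) then F.coeff l * q.eval (l : ℂ) else 0 := fun r =>
    finsum_eq_sum_of_support_subset _ (TT_support M F q r)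
  have htot : (Function.support fun l : ℤ => F.coeff l * q.eval (l : ℂ)) ⊆ ↑F.coeff.support := by
    intro l hl
    simp only [Function.mem_support, ne_eq] at hl
    rw [Finset.mem_coe, Finsupp.mem_support_iff]
    intro h; apply hl; rw [h]; ring
  rw [finsum_eq_sum_of_support_subset _ htot]
  have hrw : ∑ r ∈ Finset.range M, TT M F q (r : ℤ)
      = ∑ r ∈ Finset.range M, ∑ l ∈ F.coeff.support,
          if (M : ℤ) ∣ (l - (r : ℤ)) then F.coeff l * q.eval (l : ℂ) else 0 :=
    Finset.sum_congr rfl fun r _ => hTT (r : ℤ)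
  rw [hrw, Finset.sum_comm]
  refine Finset.sum_congr rfl fun l _ => ?_
  have hM0 : (0 : ℤ) < (M : ℤ) := by exact_mod_cast (by omega : 0 < M)
  have h0le : 0 ≤ l % (M : ℤ) := Int.emod_nonneg l (by omega)
  have hlt : l % (M : ℤ) < (M : ℤ) := Int.emod_lt_of_pos l hM0
  set r0 : ℕ := (l % (M : ℤ)).toNat with hr0def
  have hr0 : (r0 : ℤ) = l % (M : ℤ) := Int.toNat_of_nonneg h0le
  rw [Finset.sum_eq_single r0]
  · rw [if_pos]
    exact ⟨l / (M : ℤ), by rw [hr0, Int.emod_def]; ring⟩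
  · intro r hr hne
    rw [if_neg]
    intro hd
    obtain ⟨t, ht⟩ := hd
    have h1 : (r : ℤ) = l - (M : ℤ) * t := by omega
    have h2 : (r : ℤ) % (M : ℤ) = l % (M : ℤ) := by rw [h1]; simp [Int.sub_emod, Int.mul_emod_right]
    have h4 : (r : ℤ) < (M : ℤ) := by exact_mod_cast Finset.mem_range.mp hr
    have h3 : (r : ℤ) % (M : ℤ) = r := Int.emod_eq_of_lt (by positivity) h4
    have h5 : (r : ℤ) = (r0 : ℤ) := by rw [hr0, ← h2, h3]
    exact hne (by exact_mod_cast h5)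
  · intro h
    exfalso
    apply h
    rw [Finset.mem_range]
    omega

lemma moments_eval (M : ℕ) (J : ℕ) (a : ℤ → ℂ) (ha : (Function.support a).Finite) (s : ℝ)
    (hmom : ∀ j : ℕ, j < J → ∑ᶠ k : ℤ, (k : ℂ) ^ j * a k = (((M : ℂ) - 1) * (s : ℂ)) ^ j)
    (q : Polynomial ℂ) (hq : q.natDegree < J) :
    ∑ᶠ l : ℤ, a l * q.eval (l : ℂ) = q.eval (((M : ℂ) - 1) * (s : ℂ)) := by
  have hsub : (Function.support fun l : ℤ => a l * q.eval (l : ℂ)) ⊆ ↑ha.toFinset := by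
    intro l hl
    simp only [Function.mem_support, ne_eq] at hl
    rw [Set.Finite.coe_toFinset, Function.mem_support]
    intro h; apply hl; rw [h]; ring
  rw [finsum_eq_sum_of_support_subset _ hsub]
  have hterm : ∀ l ∈ ha.toFinset, a l * q.eval (l : ℂ)
      = ∑ i ∈ Finset.range J, q.coeff i * ((l : ℂ) ^ i * a l) := by
    intro l _
    rw [eval_eq_sum_range' hq, Finset.mul_sum]
    exact Finset.sum_congr rfl fun i _ => by ring
  rw [Finset.sum_congr rfl hterm, Finset.sum_comm]
  have hm : ∀ i ∈ Finset.range J, ∑ l ∈ ha.toFinset, q.coeff i * ((l : ℂ) ^ i * a l)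
      = q.coeff i * (((M : ℂ) - 1) * (s : ℂ)) ^ i := by
    intro i hi
    rw [← Finset.mul_sum]
    congr 1
    rw [← hmom i (Finset.mem_range.mp hi)]
    symm
    apply finsum_eq_sum_of_support_subset
    intro l hl
    simp only [Function.mem_support, ne_eq] at hl
    rw [Set.Finite.coe_toFinset, Function.mem_support]
    intro h; apply hl; rw [h]; ring
  rw [Finset.sum_congr rfl hm]
  exact (eval_eq_sum_range' hq _).symm


lemma deg_comp_lt {p L : Polynomial ℂ} {J : ℕ} (hJ : 1 ≤ J) (hp : p.degree < (J : ℕ))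
    (hL : L.natDegree ≤ 1) : (p.comp L).degree < (J : ℕ) := by
  have h1 : (p.comp L).natDegree < J := by
    calc (p.comp L).natDegree = p.natDegree * L.natDegree := natDegree_comp
      _ ≤ p.natDegree * 1 := Nat.mul_le_mul_left _ hL
      _ = p.natDegree := mul_one _
      _ < J := natdeg_lt hJ hp
  calc (p.comp L).degree ≤ ((p.comp L).natDegree : WithBot ℕ) := degree_le_natDegree
    _ < ((J : ℕ) : WithBot ℕ) := by exact_mod_cast h1

lemma step_lemma (M : ℕ) (hM : 2 ≤ M) (J : ℕ) (hJ : 1 ≤ J) (a : ℤ → ℂ)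
    (ha : (Function.support a).Finite)
    (hsr : ∃ b : LaurentPolynomial ℂ,
      symb a = (∑ i ∈ Finset.range M, LaurentPolynomial.T (i : ℤ)) ^ J * b)
    (s : ℝ)
    (hmom : ∀ j : ℕ, j < J → ∑ᶠ k : ℤ, (k : ℂ) ^ j * a k = (((M : ℂ) - 1) * (s : ℂ)) ^ j)
    (p : Polynomial ℂ) (hp : p.degree < (J : ℕ)) (j : ℤ) :
    subdiv M a (fun t : ℤ => p.eval (t : ℂ)) j
      = p.eval ((M : ℂ)⁻¹ * ((s : ℂ) + (j : ℂ)) - (s : ℂ)) := by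
  have hM0 : (M : ℂ) ≠ 0 := by
    simp only [ne_eq, Nat.cast_eq_zero]; omega
  have hMZ : (M : ℤ) ≠ 0 := by omega
  set q : Polynomial ℂ := p.comp (Polynomial.C ((M : ℂ)⁻¹) * (Polynomial.C (j : ℂ) - X))
    with hqdef
  have hqdeg : q.degree < (J : ℕ) := deg_comp_lt hJ hp (by compute_degree)
  have hTTa : TT M (symb a) q j
      = ∑ᶠ l : ℤ, if (M : ℤ) ∣ (l - j) then a l * q.eval (l : ℂ) else 0 := by
    unfold TT
    refine finsum_congr fun l => ?_
    rw [symb_apply a ha l]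
  set S : Set ℤ := {l : ℤ | (M : ℤ) ∣ (l - j)} with hS
  set g : ℤ → ℤ := fun k => j - (M : ℤ) * k with hg
  have hrange : Set.range g = S := by
    ext l
    constructor
    · rintro ⟨k, rfl⟩
      show (M : ℤ) ∣ (j - (M : ℤ) * k - j)
      exact ⟨-k, by ring⟩
    · rintro ⟨t, ht⟩
      exact ⟨-t, by simp only [hg, mul_neg]; omega⟩
  have hginj : Function.Injective g := by
    intro x y hxy
    simp only [hg] at hxy
    have : (M : ℤ) * x = (M : ℤ) * y := by omega
    exact mul_left_cancel₀ hMZ this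
  have e1 : (∑ᶠ l : ℤ, if (M : ℤ) ∣ (l - j) then a l * q.eval (l : ℂ) else 0)
      = ∑ᶠ l ∈ S, a l * q.eval (l : ℂ) := by
    rw [finsum_mem_def]
    refine finsum_congr fun l => ?_
    by_cases hc : (M : ℤ) ∣ (l - j)
    · rw [if_pos hc, Set.indicator_of_mem (show l ∈ S from hc)]
    · rw [if_neg hc, Set.indicator_of_notMem (show l ∉ S from hc)]
  have e2 : (∑ᶠ l ∈ S, a l * q.eval (l : ℂ))
      = ∑ᶠ k : ℤ, a (g k) * q.eval ((g k : ℤ) : ℂ) := by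
    rw [← hrange, finsum_mem_range hginj]
  have e3 : ∀ k : ℤ, a (g k) * q.eval ((g k : ℤ) : ℂ)
      = p.eval (k : ℂ) * a (j - (M : ℤ) * k) := by
    intro k
    have hev : (Polynomial.C ((M : ℂ)⁻¹) * (Polynomial.C (j : ℂ) - X)).eval
        ((j : ℂ) - (M : ℂ) * (k : ℂ)) = (k : ℂ) := by
      simp only [eval_mul, eval_C, eval_sub, eval_X]
      field_simp
      ring
    have hq1 : q.eval ((j : ℂ) - (M : ℂ) * (k : ℂ)) = p.eval (k : ℂ) := by
      rw [hqdef, eval_comp, hev]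
    have hcast : ((g k : ℤ) : ℂ) = (j : ℂ) - (M : ℂ) * (k : ℂ) := by
      simp only [hg]; push_cast; ring
    rw [hcast, hq1, mul_comm]
  have key1 : (∑ᶠ k : ℤ, p.eval (k : ℂ) * a (j - (M : ℤ) * k)) = TT M (symb a) q j := by
    rw [hTTa, e1, e2]
    exact (finsum_congr e3).symm
  obtain ⟨b, hb⟩ := hsr
  have hconst : ∀ r : ℤ, TT M (symb a) q r = TT M (symb a) q j := by
    intro r
    rw [hb]
    exact TT_const M J b q hqdeg r j
  have key2 : (M : ℂ) * TT M (symb a) q j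
      = ∑ r ∈ Finset.range M, TT M (symb a) q (r : ℤ) := by
    have h1 : ∑ r ∈ Finset.range M, TT M (symb a) q (r : ℤ)
        = ∑ _r ∈ Finset.range M, TT M (symb a) q j :=
      Finset.sum_congr rfl fun r _ => hconst (r : ℤ)
    rw [h1, Finset.sum_const, Finset.card_range, nsmul_eq_mul]
  have key3 : (∑ᶠ l : ℤ, (symb a).coeff l * q.eval (l : ℂ)) = ∑ᶠ l : ℤ, a l * q.eval (l : ℂ) :=
    finsum_congr fun l => by rw [symb_apply a ha l]
  have key4 : q.eval (((M : ℂ) - 1) * (s : ℂ))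
      = p.eval ((M : ℂ)⁻¹ * ((s : ℂ) + (j : ℂ)) - (s : ℂ)) := by
    rw [hqdef, eval_comp]
    simp only [eval_mul, eval_C, eval_sub, eval_X]
    congr 1
    field_simp
    ring
  have hqnat : q.natDegree < J := natdeg_lt hJ hqdeg
  show (M : ℂ) * (∑ᶠ k : ℤ, (fun t : ℤ => p.eval (t : ℂ)) k * a (j - (M : ℤ) * k)) = _
  calc (M : ℂ) * (∑ᶠ k : ℤ, (fun t : ℤ => p.eval (t : ℂ)) k * a (j - (M : ℤ) * k))
      = (M : ℂ) * TT M (symb a) q j := by rw [← key1]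
    _ = ∑ r ∈ Finset.range M, TT M (symb a) q (r : ℤ) := key2
    _ = ∑ᶠ l : ℤ, (symb a).coeff l * q.eval (l : ℂ) := TT_total M hM (symb a) q
    _ = ∑ᶠ l : ℤ, a l * q.eval (l : ℂ) := key3
    _ = q.eval (((M : ℂ) - 1) * (s : ℂ)) := moments_eval M J a ha s hmom q hqnat
    _ = p.eval ((M : ℂ)⁻¹ * ((s : ℂ) + (j : ℂ)) - (s : ℂ)) := key4

theorem subdivision_iterate_polynomial (M : ℕ) (hM : 2 ≤ M) (J : ℕ) (hJ : 1 ≤ J)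
    (a : ℤ → ℂ) (ha : (Function.support a).Finite)
    (hsum : ∑ᶠ k : ℤ, a k = 1)
    (hsr : ∃ b : LaurentPolynomial ℂ,
      symb a = (∑ i ∈ Finset.range M, LaurentPolynomial.T (i : ℤ)) ^ J * b)
    (s : ℝ)
    (hmom : ∀ j : ℕ, j < J →
      ∑ᶠ k : ℤ, (k : ℂ) ^ j * a k = (((M : ℂ) - 1) * (s : ℂ)) ^ j) :
    ∀ p : Polynomial ℂ, p.degree < J → ∀ n : ℕ, 1 ≤ n → ∀ k : ℤ,
      (subdiv M a)^[n] (fun t : ℤ => Polynomial.eval (t : ℂ) p) k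
        = Polynomial.eval (((M : ℂ) ^ n)⁻¹ * ((s : ℂ) + (k : ℂ)) - (s : ℂ)) p := by
  have hM0 : (M : ℂ) ≠ 0 := by
    simp only [ne_eq, Nat.cast_eq_zero]; omega
  suffices H : ∀ n : ℕ, ∀ p : Polynomial ℂ, p.degree < (J : ℕ) → ∀ k : ℤ,
      (subdiv M a)^[n] (fun t : ℤ => p.eval (t : ℂ)) k
        = p.eval (((M : ℂ) ^ n)⁻¹ * ((s : ℂ) + (k : ℂ)) - (s : ℂ)) by
    intro p hp n hn k
    exact H n p hp k
  intro n
  induction n with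
  | zero =>
      intro p hp k
      simp only [Function.iterate_zero, id_eq, pow_zero, inv_one, one_mul]
      congr 1
      ring
  | succ n ihn =>
      intro p hp k
      rw [Function.iterate_succ_apply]
      set L : Polynomial ℂ :=
        Polynomial.C ((M : ℂ)⁻¹) * (Polynomial.C (s : ℂ) + X) - Polynomial.C (s : ℂ) with hL
      have hstepfun : subdiv M a (fun t : ℤ => p.eval (t : ℂ))
          = fun t : ℤ => (p.comp L).eval (t : ℂ) := by
        funext t
        rw [step_lemma M hM J hJ a ha hsr s hmom p hp t, hL, eval_comp]
        simp only [eval_sub, eval_mul, eval_add, eval_C, eval_X]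
      rw [hstepfun]
      have hdeg : (p.comp L).degree < (J : ℕ) := deg_comp_lt hJ hp (by rw [hL]; compute_degree)
      rw [ihn (p.comp L) hdeg k, eval_comp]
      congr 1
      simp only [hL, eval_sub, eval_mul, eval_add, eval_C, eval_X]
      have hMn : (M : ℂ) ^ n ≠ 0 := pow_ne_zero _ hM0
      rw [pow_succ]
      field_simp
      ring
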